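/- arXiv:math/0210103 — 4 statements merged into one kernel-verified Lean document; each statement's English description precedes it below -/
import Mathlib

section
/- Let T : V → W be linear between finite-dimensional real vector spaces, ω skew-symmetric bilinear on W, and J an (ω,T)-tame complex structure on V. Then there is a unique complex structure T_*J on the image T(V) ⊆ W making T complex linear, i.e. T ∘ J = (T_*J) ∘ T on V; moreover T_*J is ω-tame on T(V) (ω(w, (T_*J)w) > 0 for all nonzero w ∈ T(V)). -/
/-- For an `(ω,T)`-tame complex structure `J` on `V`, there is a unique complex
structure `T_*J` on the image `T(V) ⊆ W` making `T` complex linear, and it is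
`ω`-tame on `T(V)`. -/
theorem stmt2 {V W : Type*} [AddCommGroup V] [Module ℝ V] [FiniteDimensional ℝ V]
    [AddCommGroup W] [Module ℝ W] [FiniteDimensional ℝ W]
    (T : V →ₗ[ℝ] W)
    (ω : W →ₗ[ℝ] W →ₗ[ℝ] ℝ) (hskew : ∀ v w : W, ω v w = -ω w v)
    (J : V →ₗ[ℝ] V) (hJ : ∀ v : V, J (J v) = -v)
    (htame : ∀ v : V, T v ≠ 0 → 0 < ω (T v) (T (J v))) :
    ∃ K : LinearMap.range T →ₗ[ℝ] LinearMap.range T,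
      (∀ v : V, (K ⟨T v, LinearMap.mem_range_self T v⟩ : W) = T (J v)) ∧
      (∀ w : LinearMap.range T, K (K w) = -w) ∧
      (∀ w : LinearMap.range T, w ≠ 0 → 0 < ω (w : W) (K w : W)) ∧
      (∀ K' : LinearMap.range T →ₗ[ℝ] LinearMap.range T,
        (∀ v : V, (K' ⟨T v, LinearMap.mem_range_self T v⟩ : W) = T (J v)) → K' = K) := by
  -- kernel of T is J-invariant
  have hker : ∀ v : V, T v = 0 → T (J v) = 0 := by
    intro v hv
    by_contra h
    have := htame (J v) h
    rw [hJ, map_neg, map_neg, hv] at this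
    simp at this
  -- the map v ↦ T (J v), corestricted to range T
  let f : V →ₗ[ℝ] LinearMap.range T :=
    (T ∘ₗ J).codRestrict (LinearMap.range T) (fun v => LinearMap.mem_range_self T (J v))
  have hle : LinearMap.ker T ≤ LinearMap.ker f := by
    intro v hv
    simp only [LinearMap.mem_ker] at hv ⊢
    ext
    simpa [f] using hker v hv
  let e := T.quotKerEquivRange
  let K : LinearMap.range T →ₗ[ℝ] LinearMap.range T :=
    (Submodule.liftQ (LinearMap.ker T) f hle) ∘ₗ (e.symm : LinearMap.range T →ₗ[ℝ] _)
  have hKv : ∀ v : V, (K ⟨T v, LinearMap.mem_range_self T v⟩ : W) = T (J v) := by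
    intro v
    have h1 : e.symm ⟨T v, LinearMap.mem_range_self T v⟩ =
        Submodule.Quotient.mk v := by
      apply e.injective
      simp [e, LinearMap.quotKerEquivRange_apply_mk]
    simp [K, h1, f]
  refine ⟨K, hKv, ?_, ?_, ?_⟩
  · rintro ⟨w, v, rfl⟩
    have h1 : K ⟨T v, LinearMap.mem_range_self T v⟩ =
        ⟨T (J v), LinearMap.mem_range_self T (J v)⟩ := Subtype.ext (hKv v)
    rw [h1]
    have h2 : K ⟨T (J v), LinearMap.mem_range_self T (J v)⟩ =
        ⟨T (J (J v)), LinearMap.mem_range_self T (J (J v))⟩ := Subtype.ext (hKv (J v))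
    rw [h2]
    ext
    simp [hJ]
  · rintro ⟨w, v, rfl⟩ hw
    have hv : T v ≠ 0 := fun h => hw (Subtype.ext h)
    have := htame v hv
    have h1 : K ⟨T v, LinearMap.mem_range_self T v⟩ =
        ⟨T (J v), LinearMap.mem_range_self T (J v)⟩ := Subtype.ext (hKv v)
    rw [h1]
    exact this
  · intro K' hK'
    ext ⟨w, v, rfl⟩
    exact (hK' v).trans (hKv v).symm
end

section
/- Let J : ℝ^{2n} → ℝ^{2n} (n ≥ 2) be a linear complex structure such that every 1-dimensional complex subspace of ℂⁿ = ℝ^{2n} (with respect to the standard structure i) is J-invariant. Then J = i or J = -i; if furthermore J induces the same orientation as i (equivalently, J agrees with i on at least one complex line), then J = i. -/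
/-- If every `i`-complex line of `ℂⁿ` (`n ≥ 2`) is invariant under an ℝ-linear
complex structure `J`, then `J = i` or `J = -i`; if moreover `J` agrees with `i`
on some complex line, then `J = i`. -/
theorem stmt6 (n : ℕ) (hn : 2 ≤ n)
    (J : (Fin n → ℂ) →ₗ[ℝ] (Fin n → ℂ))
    (hJ : ∀ v : Fin n → ℂ, J (J v) = -v)
    (hline : ∀ v : Fin n → ℂ, ∀ w ∈ Submodule.span ℂ {v}, J w ∈ Submodule.span ℂ {v}) :
    ((∀ v : Fin n → ℂ, J v = Complex.I • v) ∨ (∀ v : Fin n → ℂ, J v = -(Complex.I • v))) ∧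
    ((∃ v : Fin n → ℂ, v ≠ 0 ∧ J v = Complex.I • v) → ∀ v : Fin n → ℂ, J v = Complex.I • v) := by
  have key : ∀ v : Fin n → ℂ, ∃ a : ℂ, J v = a • v := by
    intro v
    obtain ⟨a, ha⟩ := Submodule.mem_span_singleton.mp
      (hline v v (Submodule.mem_span_singleton_self v))
    exact ⟨a, ha.symm⟩
  choose a ha using key
  have pair : ∀ v w : Fin n → ℂ,
      (∀ s t : ℂ, s • v + t • w = 0 → s = 0 ∧ t = 0) → a v = a w := by
    intro v w hP
    have h1 : a (v + w) • (v + w) = a v • v + a w • w := by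
      rw [← ha, map_add, ha, ha]
    have h3 : (a (v + w) - a v) • v + (a (v + w) - a w) • w = 0 := by
      linear_combination (norm := module) h1
    obtain ⟨hs, ht⟩ := hP _ _ h3
    rw [sub_eq_zero] at hs ht
    exact hs.symm.trans ht
  set e : Fin n → (Fin n → ℂ) := fun i => Pi.single i 1 with he
  let i0 : Fin n := ⟨0, by omega⟩
  let i1 : Fin n := ⟨1, by omega⟩
  have hne : i0 ≠ i1 := by simp [i0, i1, Fin.ext_iff]
  have he0 : e i0 ≠ 0 := by
    intro h
    have := congrFun h i0
    simp [he, Pi.single_apply] at this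
  have hP01 : ∀ s t : ℂ, s • e i0 + t • e i1 = 0 → s = 0 ∧ t = 0 := by
    intro s t h
    have h0 := congrFun h i0
    have h1 := congrFun h i1
    simp [he, Pi.single_apply, hne, hne.symm] at h0 h1
    exact ⟨h0, h1⟩
  have h01 : a (e i0) = a (e i1) := pair _ _ hP01
  -- main claim: J v = a (e i0) • v for all v
  have hall : ∀ v : Fin n → ℂ, J v = a (e i0) • v := by
    intro v
    rcases eq_or_ne v 0 with rfl | hv
    · simp
    rw [ha v]
    by_cases hP : ∀ s t : ℂ, s • v + t • e i0 = 0 → s = 0 ∧ t = 0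
    · rw [pair v (e i0) hP]
    · push_neg at hP
      obtain ⟨s, t, hst, hnot⟩ := hP
      have hs : s ≠ 0 := by
        rintro rfl
        simp only [zero_smul, zero_add, smul_eq_zero] at hst
        rcases hst with ht | h0
        · exact hnot rfl ht
        · exact he0 h0
      -- v = (-t/s) • e i0
      have hsv : s • v = (-t) • e i0 := by
        linear_combination (norm := module) hst
      have hv' : v = (-t / s) • e i0 := by
        calc v = s⁻¹ • (s • v) := by rw [smul_smul, inv_mul_cancel₀ hs, one_smul]
        _ = s⁻¹ • ((-t) • e i0) := by rw [hsv]
        _ = (-t / s) • e i0 := by rw [smul_smul]; ring_nf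
      have hts : -t / s ≠ 0 := by
        intro h
        rw [h, zero_smul] at hv'
        exact hv hv'
      have hP1 : ∀ s' t' : ℂ, s' • v + t' • e i1 = 0 → s' = 0 ∧ t' = 0 := by
        intro s' t' h
        rw [hv', smul_smul] at h
        obtain ⟨h0, h1⟩ := hP01 _ _ h
        refine ⟨?_, h1⟩
        rcases mul_eq_zero.mp h0 with h' | h'
        · exact h'
        · exact absurd h' hts
      rw [pair v (e i1) hP1, h01]
  -- λ² = -1
  set lam : ℂ := a (e i0) with hlam
  have hsq : lam ^ 2 = -1 := by
    have h := hJ (e i0)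
    rw [hall, hall, smul_smul] at h
    have h2 : (lam * lam + 1) • e i0 = 0 := by
      rw [add_smul, one_smul, h]; module
    rcases smul_eq_zero.mp h2 with h3 | h3
    · have : lam * lam = -1 := by linear_combination h3
      rw [sq]; exact this
    · exact absurd h3 he0
  have hcases : lam = Complex.I ∨ lam = -Complex.I := by
    have : (lam - Complex.I) * (lam + Complex.I) = 0 := by
      have : Complex.I ^ 2 = -1 := Complex.I_sq
      ring_nf
      linear_combination hsq - this
    rcases mul_eq_zero.mp this with h | h
    · left; exact sub_eq_zero.mp h
    · right; linear_combination h
  constructor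
  · rcases hcases with h | h
    · left; intro v; rw [hall, h]
    · right; intro v; rw [hall, h]; module
  · rintro ⟨v, hv, hvi⟩ w
    rw [hall] at hvi ⊢
    have : (lam - Complex.I) • v = 0 := by
      rw [sub_smul, hvi]; module
    rcases smul_eq_zero.mp this with h | h
    · rw [sub_eq_zero.mp h]
    · exact absurd h hv
end

section
/- A linear complex structure J on ℝ^{2n}, n ≥ 2, is determined by its 1-dimensional oriented complex subspaces: if J and J' are complex structures on ℝ^{2n} with the same set of oriented complex lines (real 2-planes invariant under the structure, with the induced orientation), then J = J'. -/
/-- A complex structure on `ℝ^{2n}`, `n ≥ 2`, is determined by its oriented complex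
lines: if every oriented `J`-complex line is an oriented `J'`-complex line (i.e. for
each `v ≠ 0`, `J' v = a • v + b • J v` with `b > 0`) and vice versa, then `J = J'`. -/
theorem stmt7 {V : Type*} [AddCommGroup V] [Module ℝ V] [FiniteDimensional ℝ V]
    (n : ℕ) (hn : 2 ≤ n) (hdim : Module.finrank ℝ V = 2 * n)
    (J J' : V →ₗ[ℝ] V)
    (hJ : ∀ v : V, J (J v) = -v) (hJ' : ∀ v : V, J' (J' v) = -v)
    (h1 : ∀ v : V, v ≠ 0 → ∃ a b : ℝ, 0 < b ∧ J' v = a • v + b • J v)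
    (h2 : ∀ v : V, v ≠ 0 → ∃ a b : ℝ, 0 < b ∧ J v = a • v + b • J' v) :
    J = J' := by
  classical
  choose! a b hb hab using h1
  -- v and J v are linearly independent for v ≠ 0
  have hind : ∀ v : V, v ≠ 0 → ∀ x y : ℝ, x • v + y • J v = 0 → x = 0 ∧ y = 0 := by
    intro v hv x y h
    have h2' : x • J v + y • (J (J v)) = 0 := by
      have := congrArg J h
      simpa [map_add, map_smul] using this
    rw [hJ] at h2'
    have key : (x * x + y * y) • v = 0 := by
      linear_combination (norm := module) x • h - y • h2'
    rcases smul_eq_zero.mp key with hc | hc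
    · constructor <;> nlinarith [sq_nonneg x, sq_nonneg y]
    · exact absurd hc hv
  -- four-term independence
  have hfour : ∀ v : V, v ≠ 0 → ∀ w : V, w ∉ Submodule.span ℝ ({v, J v} : Set V) →
      ∀ x y z t : ℝ, x • v + y • J v + z • w + t • J w = 0 →
      x = 0 ∧ y = 0 ∧ z = 0 ∧ t = 0 := by
    intro v hv w hw x y z t h
    have hm : z • w + t • J w ∈ Submodule.span ℝ ({v, J v} : Set V) := by
      rw [Submodule.mem_span_pair]
      exact ⟨-x, -y, by linear_combination (norm := module) -h⟩
    obtain ⟨p, q, hpq⟩ := Submodule.mem_span_pair.mp hm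
    have hm2 : p • J v + q • (J (J v)) = z • J w + t • (J (J w)) := by
      have := congrArg J hpq
      simpa [map_add, map_smul] using this
    rw [hJ, hJ] at hm2
    have hzt : z * z + t * t = 0 := by
      by_contra hne
      apply hw
      rw [Submodule.mem_span_pair]
      refine ⟨(z * z + t * t)⁻¹ * (z * p + t * q),
        (z * z + t * t)⁻¹ * (z * q - t * p), ?_⟩
      have key : (z * z + t * t) • w = (z * p + t * q) • v + (z * q - t * p) • J v := by
        linear_combination (norm := module) (-z) • hpq + t • hm2
      have := congrArg (fun u => (z * z + t * t)⁻¹ • u) key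
      simpa [smul_smul, smul_add, inv_mul_cancel₀ hne] using this.symm
    have hz : z = 0 := by nlinarith [sq_nonneg z, sq_nonneg t]
    have ht : t = 0 := by nlinarith [sq_nonneg z, sq_nonneg t]
    subst hz ht
    have h' : x • v + y • J v = 0 := by linear_combination (norm := module) h
    obtain ⟨hx, hy⟩ := hind v hv x y h'
    exact ⟨hx, hy, rfl, rfl⟩
  -- equality of coefficients for "independent" pairs
  have hpair : ∀ v : V, v ≠ 0 → ∀ w : V, w ∉ Submodule.span ℝ ({v, J v} : Set V) →
      a v = a w ∧ b v = b w := by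
    intro v hv w hw
    have hw0 : w ≠ 0 := fun h => hw (h ▸ Submodule.zero_mem _)
    have hvw : v + w ≠ 0 := by
      intro h
      apply hw
      have : w = -v := by linear_combination (norm := module) h
      rw [this]
      exact Submodule.neg_mem _ (Submodule.subset_span (by simp))
    have e1 := hab v hv
    have e2 := hab w hw0
    have e3 := hab (v + w) hvw
    have e4 : J' (v + w) = J' v + J' w := map_add _ _ _
    rw [e1, e2, e3] at e4
    have e5 : (a (v + w) - a v) • v + (b (v + w) - b v) • J v
        + (a (v + w) - a w) • w + (b (v + w) - b w) • J w = 0 := by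
      have e4' : a (v+w) • (v + w) + b (v+w) • (J v + J w)
          = a v • v + b v • J v + (a w • w + b w • J w) := by
        rw [← map_add]; exact e4
      linear_combination (norm := module) e4'
    obtain ⟨c1, c2, c3, c4⟩ := hfour v hv w hw _ _ _ _ e5
    constructor
    · linarith [sub_eq_zero.mp (by linarith : a (v+w) - a v = 0)]
    · linarith
  -- relation from J'² = -1
  have hrel : ∀ v : V, v ≠ 0 → a (J v) = -a v ∧ b v * b (J v) = a v ^ 2 + 1 := by
    intro v hv
    have hJv : J v ≠ 0 := by
      intro h
      have := hJ v
      rw [h, map_zero] at this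
      exact hv (by simpa using this.symm)
    have e1 := hab v hv
    have e2 := hab (J v) hJv
    have e4 : (-v : V) = a v • (a v • v + b v • J v)
        + b v • (a (J v) • J v + b (J v) • (-v)) := by
      conv_lhs => rw [← hJ' v, e1]
      rw [map_add, map_smul, map_smul, e1, e2, hJ]
    have e5 : (a v * a v - b v * b (J v) + 1) • v
        + (a v * b v + b v * a (J v)) • J v = 0 := by
      linear_combination (norm := module) -e4
    obtain ⟨c1, c2⟩ := hind v hv _ _ e5
    have hbv := hb v hv
    have ha : a (J v) = -a v := by
      have : b v * (a v + a (J v)) = 0 := by ring_nf; linarith [c2]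
      rcases mul_eq_zero.mp this with h | h
      · linarith
      · linarith
    refine ⟨ha, by nlinarith [c1]⟩
  -- main argument
  ext v
  rcases eq_or_ne v 0 with hv | hv
  · simp [hv]
  have hJv : J v ≠ 0 := by
    intro h
    have := hJ v
    rw [h, map_zero] at this
    exact hv (by simpa using this.symm)
  -- find w outside span {v, J v}
  have hlt : Submodule.span ℝ ({v, J v} : Set V) < ⊤ := by
    apply span_lt_top_of_card_lt_finrank
    have : ({v, J v} : Set V).toFinset.card ≤ 2 := by
      rw [Set.toFinset_insert, Set.toFinset_singleton]
      exact (Finset.card_insert_le _ _).trans (by simp)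
    omega
  obtain ⟨w, -, hw⟩ := SetLike.exists_of_lt hlt
  have hw' : w ∉ Submodule.span ℝ ({J v, J (J v)} : Set V) := by
    intro h
    apply hw
    rw [Submodule.mem_span_pair] at h ⊢
    obtain ⟨p, q, hpq⟩ := h
    rw [hJ v] at hpq
    exact ⟨-q, p, by linear_combination (norm := module) hpq⟩
  obtain ⟨ha1, hb1⟩ := hpair v hv w hw
  obtain ⟨ha2, hb2⟩ := hpair (J v) hJv w hw'
  obtain ⟨ha3, hb3⟩ := hrel v hv
  have hav : a v = 0 := by linarith
  have hbv : b v = 1 := by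
    have h1' : b v * b (J v) = 1 := by rw [hb3, hav]; ring
    have : b v * b v = 1 := by rw [hb1, ← hb2] at h1' ⊢; exact h1'
    nlinarith [hb v hv]
  have := hab v hv
  rw [hav, hbv] at this
  simpa using this.symm
end

section
/- Let V be a finite-dimensional real vector space with skew-symmetric bilinear form ω, and let J₁, J₂ be ω-compatible complex structures on V (each Jᵢ is ω-tame and ω(Jᵢv, Jᵢw) = ω(v,w) for all v,w). Then for t ∈ [0,1], B = (1-t)J₁ + tJ₂ is skew-adjoint with respect to the positive-definite symmetric bilinear form g(v,w) = ω(v, Bw), i.e. g(Bv, w) = -g(v, Bw) for all v, w. -/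
/-- For two `ω`-compatible complex structures `J₁, J₂` and `t ∈ [0,1]`, the operator
`B = (1-t)J₁ + tJ₂` is skew-adjoint with respect to the positive-definite symmetric
form `g(v,w) = ω(v, Bw)`. -/
theorem stmt8 {V : Type*} [AddCommGroup V] [Module ℝ V] [FiniteDimensional ℝ V]
    (ω : V →ₗ[ℝ] V →ₗ[ℝ] ℝ) (hskew : ∀ v w : V, ω v w = -ω w v)
    (J₁ J₂ : V →ₗ[ℝ] V)
    (hJ₁ : ∀ v : V, J₁ (J₁ v) = -v) (hJ₂ : ∀ v : V, J₂ (J₂ v) = -v)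
    (htame₁ : ∀ v : V, v ≠ 0 → 0 < ω v (J₁ v))
    (htame₂ : ∀ v : V, v ≠ 0 → 0 < ω v (J₂ v))
    (hcomp₁ : ∀ v w : V, ω (J₁ v) (J₁ w) = ω v w)
    (hcomp₂ : ∀ v w : V, ω (J₂ v) (J₂ w) = ω v w)
    (t : ℝ) (ht0 : 0 ≤ t) (ht1 : t ≤ 1)
    (B : V →ₗ[ℝ] V) (hB : B = (1 - t) • J₁ + t • J₂) :
    (∀ v w : V, ω v (B w) = ω w (B v)) ∧
    (∀ v : V, v ≠ 0 → 0 < ω v (B v)) ∧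
    (∀ v w : V, ω (B v) (B w) = -ω v (B (B w))) := by
  have key : ∀ (J : V →ₗ[ℝ] V), (∀ v : V, J (J v) = -v) →
      (∀ v w : V, ω (J v) (J w) = ω v w) → ∀ v w : V, ω v (J w) = ω w (J v) := by
    intro J hJ hc v w
    have h1 : ω v (J w) = ω (J v) (J (J w)) := (hc v (J w)).symm
    rw [hJ] at h1
    simp only [map_neg] at h1
    rw [h1, hskew (J v) w]
    ring
  have hsym : ∀ v w : V, ω v (B w) = ω w (B v) := by
    intro v w
    simp only [hB, LinearMap.add_apply, LinearMap.smul_apply, map_add, map_smul,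
      smul_eq_mul]
    rw [key J₁ hJ₁ hcomp₁ v w, key J₂ hJ₂ hcomp₂ v w]
  refine ⟨hsym, ?_, ?_⟩
  · intro v hv
    have h1 := htame₁ v hv
    have h2 := htame₂ v hv
    simp only [hB, LinearMap.add_apply, LinearMap.smul_apply, map_add, map_smul,
      smul_eq_mul]
    rcases lt_or_eq_of_le ht1 with h | h
    · nlinarith
    · subst h; simpa using h2
  · intro v w
    rw [hsym v (B w), hskew (B w) (B v)]; ring
end
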